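/- Suppose the linear inverse-problem setup and accuracy assumptions hold, and that x̂ satisfies the strong source condition for some ŵ ∈ Y with parameters γ_δ > 0. If (α_δ², δ², e_δ)/min{α_δ, γ_δ} → 0 as δ ↘ 0, then ‖x_δ − x̂‖_X → 0 as δ ↘ 0. -/

import Mathlib

open scoped RealInnerProductSpace
open Filter Topology Metric

set_option maxHeartbeats 1000000 in
/-- **Norm convergence under the strong source condition**
(Corollary `cor:linear:strong-subreg`).  In the linear inverse-problem setting,
suppose `x̂` satisfies the strong source condition for `ŵ`: the basic source
condition `A x̂ = b̂`, `0 ∈ A*ŵ + ∂R(x̂)` holds, and for every `δ > 0` the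
functional `J_δ + α_δ R` is strongly locally subdifferentiable at `x̂` for
`J_δ'(x̂) - α_δ A*ŵ` with respect to the norm
`‖z‖_δ = sqrt(‖Az‖² + γ_δ‖z‖²)`, with factor `γ > 0` independent of `δ` and
neighbourhood `U δ ⊇ U_ρ`.  If `(α_δ², δ², e_δ)/min{α_δ, γ_δ} → 0` as `δ ↘ 0`,
then `‖x_δ - x̂‖ → 0` as `δ ↘ 0`. -/
theorem strong_source_condition_convergence
    {X Y : Type*} [NormedAddCommGroup X] [NormedSpace ℝ X] [CompleteSpace X]
    [NormedAddCommGroup Y] [InnerProductSpace ℝ Y] [CompleteSpace Y]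
    (A : X →L[ℝ] Y) (R : X → EReal)
    (hconv : ∀ p q : X, ∀ t : ℝ, 0 ≤ t → t ≤ 1 →
      R (t • p + (1 - t) • q) ≤ (t : EReal) * R p + ((1 - t : ℝ) : EReal) * R q)
    (hproper : ∃ p, R p ≠ ⊤) (hnebot : ∀ p, R p ≠ ⊥)
    (hlsc : LowerSemicontinuous R)
    (bhat : Y) (b : ℝ → Y) (hb : ∀ δ : ℝ, 0 < δ → ‖b δ - bhat‖ ≤ δ)
    (α e : ℝ → ℝ) (hα : ∀ δ : ℝ, 0 < δ → 0 < α δ) (he : ∀ δ : ℝ, 0 < δ → 0 ≤ e δ)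
    (x : ℝ → X) (xhat : X) (what : Y)
    -- basic source condition
    (hsol : A xhat = bhat)
    (hsource : ∀ z : X, R xhat + ((-⟪what, A (z - xhat)⟫ : ℝ) : EReal) ≤ R z)
    -- accuracy of the approximate solutions
    (hacc : ∀ δ : ℝ, 0 < δ →
      ((2⁻¹ * ‖A (x δ) - b δ‖ ^ 2 : ℝ) : EReal) + (α δ : EReal) * R (x δ)
        ≤ ((2⁻¹ * ‖A xhat - b δ‖ ^ 2 : ℝ) : EReal) + (α δ : EReal) * R xhat
          + (e δ : EReal))
    -- strong local subdifferentiability with respect to ‖·‖_δ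
    (γ ρ : ℝ) (hγ : 0 < γ) (hρ : 0 < ρ) (γΔ : ℝ → ℝ) (hγΔ : ∀ δ : ℝ, 0 < δ → 0 < γΔ δ)
    (U : ℝ → Set X)
    (hUnhds : ∀ δ : ℝ, 0 < δ → U δ ∈ nhds xhat)
    (hUρ : ∀ δ : ℝ, 0 < δ →
      {z : X | ‖A (z - xhat)‖ ≤ ρ ∧ R z ≤ R xhat + (ρ : EReal)} ⊆ U δ)
    (hssub : ∀ δ : ℝ, 0 < δ → ∀ z ∈ U δ,
      ((2⁻¹ * ‖A xhat - b δ‖ ^ 2 + ⟪A xhat - b δ - α δ • what, A (z - xhat)⟫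
          + γ * (‖A (z - xhat)‖ ^ 2 + γΔ δ * ‖z - xhat‖ ^ 2) : ℝ) : EReal)
          + (α δ : EReal) * R xhat
        ≤ ((2⁻¹ * ‖A z - b δ‖ ^ 2 : ℝ) : EReal) + (α δ : EReal) * R z)
    -- parameter convergence: (α_δ², δ², e_δ)/min{α_δ, γ_δ} → 0
    (hlim1 : Tendsto (fun δ => α δ ^ 2 / min (α δ) (γΔ δ)) (nhdsWithin 0 (Set.Ioi 0)) (nhds 0))
    (hlim2 : Tendsto (fun δ => δ ^ 2 / min (α δ) (γΔ δ)) (nhdsWithin 0 (Set.Ioi 0)) (nhds 0))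
    (hlim3 : Tendsto (fun δ => e δ / min (α δ) (γΔ δ)) (nhdsWithin 0 (Set.Ioi 0)) (nhds 0)) :
    Tendsto (fun δ => ‖x δ - xhat‖) (nhdsWithin 0 (Set.Ioi 0)) (nhds 0) := by
  set l := nhdsWithin (0:ℝ) (Set.Ioi 0) with hldef
  obtain ⟨p, hp⟩ := hproper
  have hr0top : R xhat ≠ ⊤ := by
    intro h
    have h2 := hsource p
    rw [h, EReal.top_add_coe] at h2
    exact hp (top_le_iff.mp h2)
  set r0 := (R xhat).toReal with hr0def
  have hr0 : R xhat = (r0 : EReal) := (EReal.coe_toReal hr0top (hnebot xhat)).symm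
  set w := ‖what‖ with hwdef
  have hw0 : 0 ≤ w := norm_nonneg _
  set m : ℝ → ℝ := fun δ => min (α δ) (γΔ δ) with hmdef
  have hmpos : ∀ δ : ℝ, 0 < δ → 0 < m δ := fun δ hδ => lt_min (hα δ hδ) (hγΔ δ hδ)
  have hmα : ∀ δ : ℝ, m δ ≤ α δ := fun δ => min_le_left _ _
  have hmγ : ∀ δ : ℝ, m δ ≤ γΔ δ := fun δ => min_le_right _ _
  have hpos : ∀ᶠ δ in l, 0 < δ := eventually_mem_nhdsWithin
  have hα0 : Tendsto α l (𝓝 0) := by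
    refine squeeze_zero' (hpos.mono fun δ hδ => (hα δ hδ).le) ?_ hlim1
    filter_upwards [hpos] with δ hδ
    rw [le_div_iff₀ (hmpos δ hδ)]
    have := mul_le_mul_of_nonneg_left (hmα δ) (hα δ hδ).le
    linarith only [this]
  have hδ0 : Tendsto (fun δ : ℝ => δ) l (𝓝 0) := tendsto_id.mono_left nhdsWithin_le_nhds
  have he0 : Tendsto e l (𝓝 0) := by
    refine squeeze_zero' (hpos.mono fun δ hδ => he δ hδ) ?_ (by simpa using hlim3.mul hα0)
    filter_upwards [hpos] with δ hδ
    calc e δ = e δ / m δ * m δ := (div_mul_cancel₀ _ (hmpos δ hδ).ne').symm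
      _ ≤ e δ / m δ * α δ :=
        mul_le_mul_of_nonneg_left (hmα δ) (div_nonneg (he δ hδ) (hmpos δ hδ).le)
  have hαw : Tendsto (fun δ => α δ * w) l (𝓝 0) := by simpa using hα0.mul_const w
  set Bd : ℝ → ℝ := fun δ =>
    e δ / m δ / γ + δ ^ 2 / m δ / (2 * γ ^ 2) + α δ ^ 2 / m δ * (w ^ 2 / (2 * γ ^ 2))
    with hBddef
  have hB : Tendsto Bd l (𝓝 0) := by
    rw [hBddef]
    simpa using
      ((hlim3.div_const γ).add (hlim2.div_const (2 * γ ^ 2))).add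
        (hlim1.mul_const (w ^ 2 / (2 * γ ^ 2)))
  have hsq : Tendsto (fun δ => Real.sqrt (Bd δ)) l (𝓝 0) := by
    have h := (Real.continuous_sqrt.tendsto 0).comp hB
    simpa [Function.comp_def] using h
  refine squeeze_zero' (Eventually.of_forall fun δ => norm_nonneg _) ?_ hsq
  filter_upwards [hpos, hαw.eventually_lt_const (show (0:ℝ) < ρ/8 by positivity),
    hδ0.eventually_lt_const (show (0:ℝ) < ρ/8 by positivity),
    he0.eventually_lt_const (show (0:ℝ) < ρ^2/64 by positivity),
    hlim2.eventually_lt_const hρ, hlim3.eventually_lt_const (half_pos hρ)]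
    with δ hδ hE1 hE2 hE4 hE5 hE6
  have hαδ := hα δ hδ
  have heδ := he δ hδ
  have hbδ := hb δ hδ
  -- R (x δ) is finite
  have hr1top : R (x δ) ≠ ⊤ := by
    intro htop
    have h2 := hacc δ hδ
    rw [htop, hr0, EReal.coe_mul_top_of_pos hαδ, EReal.coe_add_top] at h2
    have h4 : ((2⁻¹ * ‖A xhat - b δ‖ ^ 2 : ℝ) : EReal) + ((α δ : ℝ) : EReal) * ((r0 : ℝ) : EReal)
        + ((e δ : ℝ) : EReal) ≠ ⊤ := by
      rw [← EReal.coe_mul, ← EReal.coe_add, ← EReal.coe_add]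
      exact EReal.coe_ne_top _
    exact h4 (top_le_iff.mp h2)
  set r1 := (R (x δ)).toReal with hr1def
  have hr1 : R (x δ) = (r1 : EReal) := (EReal.coe_toReal hr1top (hnebot (x δ))).symm
  -- real versions
  have haccR : 2⁻¹ * ‖A (x δ) - b δ‖ ^ 2 + α δ * r1
      ≤ 2⁻¹ * ‖A xhat - b δ‖ ^ 2 + α δ * r0 + e δ := by
    have h2 := hacc δ hδ
    rw [hr0, hr1] at h2
    exact_mod_cast h2
  have hsrcR : r0 + -⟪what, A (x δ - xhat)⟫ ≤ r1 := by
    have h2 := hsource (x δ)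
    rw [hr0, hr1] at h2
    exact_mod_cast h2
  -- norm facts
  have hAb : ‖A xhat - b δ‖ ≤ δ := by
    rw [hsol, norm_sub_rev]; exact hbδ
  have hAb2 : ‖A xhat - b δ‖ ^ 2 ≤ δ ^ 2 := pow_le_pow_left₀ (norm_nonneg _) hAb 2
  set t := ‖A (x δ) - b δ‖ with htdef
  set s := ‖A (x δ - xhat)‖ with hsdef
  set n := ‖x δ - xhat‖ with hndef
  have ht0 : 0 ≤ t := norm_nonneg _
  have hs0 : 0 ≤ s := norm_nonneg _
  have hn0 : 0 ≤ n := norm_nonneg _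
  have hs : s ≤ t + δ := by
    have h1 : A (x δ - xhat) = (A (x δ) - b δ) + (b δ - bhat) := by
      rw [map_sub, hsol]; abel
    calc s = ‖(A (x δ) - b δ) + (b δ - bhat)‖ := by rw [hsdef, h1]
      _ ≤ t + ‖b δ - bhat‖ := norm_add_le _ _
      _ ≤ t + δ := by linarith only [hbδ]
  have hinw : ⟪what, A (x δ - xhat)⟫ ≤ w * s := real_inner_le_norm _ _
  -- quadratic bound on t, membership in U_ρ
  have g0 : ⟪what, A (x δ - xhat)⟫ ≤ w * (t + δ) :=
    le_trans hinw (mul_le_mul_of_nonneg_left hs hw0)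
  have g1 : α δ * ⟪what, A (x δ - xhat)⟫ ≤ α δ * (w * (t + δ)) :=
    mul_le_mul_of_nonneg_left g0 hαδ.le
  have g2 : α δ * (r0 - r1) ≤ α δ * ⟪what, A (x δ - xhat)⟫ :=
    mul_le_mul_of_nonneg_left (by linarith only [hsrcR]) hαδ.le
  have hmulexp : α δ * (w * (t + δ)) = (α δ * w) * t + (α δ * w) * δ := by ring
  have htq : t ^ 2 ≤ δ ^ 2 + 2 * e δ + 2 * (α δ * w) * t + 2 * (α δ * w) * δ := by
    linarith only [haccR, g1, g2, hAb2, hmulexp]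
  have hquad : (t - α δ * w) ^ 2 < (ρ / 2) ^ 2 := by
    have b1 : α δ * w * δ ≤ (ρ/8) * (ρ/8) :=
      mul_le_mul hE1.le hE2.le hδ.le (by positivity)
    have b2 : (α δ * w) ^ 2 ≤ (ρ/8) ^ 2 :=
      pow_le_pow_left₀ (mul_nonneg hαδ.le hw0) hE1.le 2
    have b3 : δ ^ 2 ≤ (ρ/8) ^ 2 := pow_le_pow_left₀ hδ.le hE2.le 2
    linarith only [htq, b1, b2, b3, hE4, heδ]
  have ht1 : t ≤ α δ * w + ρ / 2 := by
    have h7 := Real.sqrt_lt_sqrt (sq_nonneg (t - α δ * w)) hquad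
    rw [Real.sqrt_sq_eq_abs, Real.sqrt_sq (by positivity)] at h7
    have := le_abs_self (t - α δ * w)
    linarith only [h7, this]
  have hsρ : s ≤ ρ := by linarith only [hs, ht1, hE1, hE2, hρ]
  -- R (x δ) ≤ R xhat + ρ
  have hd5 : δ ^ 2 < ρ * m δ := (div_lt_iff₀ (hmpos δ hδ)).mp hE5
  have hd6 : e δ < ρ / 2 * m δ := (div_lt_iff₀ (hmpos δ hδ)).mp hE6
  have hr1r0 : r1 ≤ r0 + ρ := by
    have k1 : α δ * r1 ≤ α δ * r0 + 2⁻¹ * δ ^ 2 + e δ := by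
      linarith only [haccR, hAb2, sq_nonneg t]
    have k2 : 2⁻¹ * δ ^ 2 + e δ < ρ * α δ := by
      have j1 := mul_le_mul_of_nonneg_left (hmα δ) hρ.le
      linarith only [hd5, hd6, j1]
    by_contra hcon
    push_neg at hcon
    have := mul_lt_mul_of_pos_left hcon hαδ
    have hexp2 : α δ * (r0 + ρ) = α δ * r0 + ρ * α δ := by ring
    linarith only [k1, k2, this, hexp2]
  have hRρ : R (x δ) ≤ R xhat + (ρ : EReal) := by
    rw [hr0, hr1]
    exact_mod_cast hr1r0
  have hU : x δ ∈ U δ := hUρ δ hδ ⟨hsρ, hRρ⟩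
  -- strong subdifferentiability, real version
  have hssubR : 2⁻¹ * ‖A xhat - b δ‖ ^ 2 + ⟪A xhat - b δ - α δ • what, A (x δ - xhat)⟫
      + γ * (s ^ 2 + γΔ δ * n ^ 2) + α δ * r0
      ≤ 2⁻¹ * t ^ 2 + α δ * r1 := by
    have h2 := hssub δ hδ (x δ) hU
    rw [hr0, hr1] at h2
    exact_mod_cast h2
  have hip : ⟪A xhat - b δ - α δ • what, A (x δ - xhat)⟫
      = ⟪A xhat - b δ, A (x δ - xhat)⟫ - α δ * ⟪what, A (x δ - xhat)⟫ := by
    rw [inner_sub_left, real_inner_smul_left]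
  have hbnd1 : -(δ * s) ≤ ⟪A xhat - b δ, A (x δ - xhat)⟫ := by
    have h1 := abs_real_inner_le_norm (A xhat - b δ) (A (x δ - xhat))
    have h2 := neg_abs_le ⟪A xhat - b δ, A (x δ - xhat)⟫
    have h3 := mul_le_mul_of_nonneg_right hAb hs0
    linarith only [h1, h2, h3]
  have h12 : γ * s ^ 2 + γ * (γΔ δ * n ^ 2) ≤ e δ + δ * s + α δ * (w * s) := by
    have g3 : α δ * ⟪what, A (x δ - xhat)⟫ ≤ α δ * (w * s) :=
      mul_le_mul_of_nonneg_left hinw hαδ.le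
    linarith only [haccR, hssubR, hip, hbnd1, g3]
  have young : 4 * γ * ((δ + α δ * w) * s) ≤ 4 * γ * (γ * s ^ 2) + (δ + α δ * w) ^ 2 := by
    linarith only [sq_nonneg (2 * γ * s - (δ + α δ * w))]
  have h13 : 4 * γ * (γ * (γΔ δ * n ^ 2)) ≤ 4 * γ * e δ + (δ + α δ * w) ^ 2 := by
    have h12m := mul_le_mul_of_nonneg_left h12 (by positivity : (0:ℝ) ≤ 4 * γ)
    linarith only [h12m, young]
  have hq2 : (δ + α δ * w) ^ 2 ≤ 2 * δ ^ 2 + 2 * α δ ^ 2 * w ^ 2 := by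
    linarith only [sq_nonneg (δ - α δ * w)]
  have h17 : 4 * (γ * γ) * (m δ * n ^ 2) ≤ 4 * γ * e δ + 2 * δ ^ 2 + 2 * α δ ^ 2 * w ^ 2 := by
    have h18 : m δ * n ^ 2 ≤ γΔ δ * n ^ 2 :=
      mul_le_mul_of_nonneg_right (hmγ δ) (sq_nonneg n)
    have h19 := mul_le_mul_of_nonneg_left h18 (by positivity : (0:ℝ) ≤ 4 * (γ * γ))
    linarith only [h13, hq2, h19]
  have hc : (0:ℝ) < 4 * (γ * γ) * m δ := by
    have := hmpos δ hδ
    positivity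
  have hBdEq : Bd δ * (4 * (γ * γ) * m δ) = 4 * γ * e δ + 2 * δ ^ 2 + 2 * α δ ^ 2 * w ^ 2 := by
    rw [hBddef]
    field_simp [hγ.ne', (hmpos δ hδ).ne']
    ring
  have hn2 : n ^ 2 ≤ Bd δ := by
    refine (mul_le_mul_iff_of_pos_right hc).mp ?_
    rw [hBdEq]
    linarith only [h17]
  calc n = Real.sqrt (n ^ 2) := (Real.sqrt_sq hn0).symm
    _ ≤ Real.sqrt (Bd δ) := Real.sqrt_le_sqrt hn2
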